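/- Define graphs G_{c,ℓ} recursively by G_{1,ℓ} = P_{ℓ+1} (the path on ℓ+1 vertices) and G_{c,ℓ} obtained from ℓ disjoint copies of G_{c−1,ℓ} by adding one dominant vertex. Then for every ℓ-partition of G_{c,ℓ} (a partition of the vertex set into parts each of size at most ℓ), there exists a clique of size c+1 in G_{c,ℓ} whose vertices lie in c+1 pairwise distinct parts. -/

import Mathlib

open SimpleGraph

universe u

/-- The graph obtained from `ℓ` vertex-disjoint copies of `G` by adding one dominant
vertex (`none`) adjacent to all other vertices. -/
def addDomCopies {V : Type u} (G : SimpleGraph V) (ℓ : ℕ) :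
    SimpleGraph (Option (Fin ℓ × V)) where
  Adj x y :=
    match x, y with
    | none, none => False
    | none, some _ => True
    | some _, none => True
    | some p, some q => p.1 = q.1 ∧ G.Adj p.2 q.2
  symm := by
    constructor
    rintro (_ | p) (_ | q) h
    · exact h
    · trivial
    · trivial
    · exact ⟨h.1.symm, h.2.symm⟩
  loopless := by
    constructor
    rintro (_ | p) h
    · exact h
    · exact G.irrefl h.2

/-- Vertex type of the graph `G_{c+1,ℓ}`. -/
def GV (ℓ : ℕ) : ℕ → Type
  | 0 => Fin (ℓ + 1)
  | c + 1 => Option (Fin ℓ × GV ℓ c)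

/-- The graphs `G_{c,ℓ}` (indexed here so that `Gfam ℓ c = G_{c+1,ℓ}`):
`G_{1,ℓ}` is the path on `ℓ+1` vertices, and `G_{c,ℓ}` is obtained from `ℓ` disjoint
copies of `G_{c−1,ℓ}` by adding one dominant vertex. -/
def Gfam (ℓ : ℕ) : (c : ℕ) → SimpleGraph (GV ℓ c)
  | 0 => SimpleGraph.pathGraph (ℓ + 1)
  | c + 1 => addDomCopies (Gfam ℓ c) ℓ

/-- For every `ℓ`-partition of `G_{c,ℓ}` (here `Gfam ℓ c = G_{c+1,ℓ}`, i.e. every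
partition of the vertex set into parts of size at most `ℓ`), there is a clique of
size `c+1` (here `(c+1)+1`) whose vertices lie in pairwise distinct parts. -/
instance GVdec (ℓ : ℕ) : (c : ℕ) → DecidableEq (GV ℓ c)
  | 0 => inferInstanceAs (DecidableEq (Fin (ℓ + 1)))
  | c + 1 => haveI := GVdec ℓ c; inferInstanceAs (DecidableEq (Option (Fin ℓ × GV ℓ c)))

instance GVfintype (ℓ : ℕ) : (c : ℕ) → Fintype (GV ℓ c)
  | 0 => inferInstanceAs (Fintype (Fin (ℓ + 1)))
  | c + 1 => haveI := GVfintype ℓ c; inferInstanceAs (Fintype (Option (Fin ℓ × GV ℓ c)))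

theorem stmt_8_aux (ℓ : ℕ) (hℓ : 1 ≤ ℓ) (c : ℕ) : ∀ {ι : Type} (P : GV ℓ c → ι),
    (∀ i : ι, {v : GV ℓ c | P v = i}.ncard ≤ ℓ) →
    ∃ s : Finset (GV ℓ c), (Gfam ℓ c).IsNClique (c + 2) s ∧ Set.InjOn P ↑s := by
  induction c with
  | zero =>
    intro ι P hw
    by_cases hconst : ∀ k : Fin ℓ, P (Fin.castSucc k) = P (Fin.succ k)
    · exfalso
      have hall : ∀ v : Fin (ℓ + 1), P v = P (0 : Fin (ℓ + 1)) := by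
        intro v
        induction v using Fin.induction with
        | zero => rfl
        | succ k ihk => rw [← hconst k]; exact ihk
      have huniv : {v : GV ℓ 0 | P v = P (0 : Fin (ℓ + 1))} = Set.univ := Set.eq_univ_of_forall hall
      have h1 := hw (P (0 : Fin (ℓ + 1)))
      rw [huniv, Set.ncard_univ] at h1
      have h2 : Nat.card (GV ℓ 0) = ℓ + 1 := Nat.card_eq_of_equiv_fin (Equiv.refl _)
      omega
    · push_neg at hconst
      obtain ⟨k, hk⟩ := hconst
      have hadj : (SimpleGraph.pathGraph (ℓ + 1)).Adj (Fin.castSucc k) (Fin.succ k) :=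
        pathGraph_adj.mpr (Or.inl (by simp))
      have hne : Fin.castSucc k ≠ Fin.succ k := hadj.ne
      refine ⟨{@id (GV ℓ 0) (Fin.castSucc k), @id (GV ℓ 0) (Fin.succ k)}, ⟨?_, ?_⟩, ?_⟩
      · intro a ha b hb hab
        simp only [Finset.coe_insert, Finset.coe_singleton, Set.mem_insert_iff,
          Set.mem_singleton_iff] at ha hb
        rcases ha with rfl | rfl <;> rcases hb with rfl | rfl <;>
          first
          | exact absurd rfl hab
          | exact hadj
          | exact hadj.symm
      · rw [Finset.card_insert_of_notMem (by simp only [Finset.mem_singleton]; exact hne), Finset.card_singleton]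
      · intro x hx y hy hxy
        simp only [Finset.coe_insert, Finset.coe_singleton, Set.mem_insert_iff,
          Set.mem_singleton_iff] at hx hy
        rcases hx with rfl | rfl <;> rcases hy with rfl | rfl
        · rfl
        · exact absurd hxy hk
        · exact absurd hxy.symm hk
        · rfl
  | succ c ih =>
    intro ι P hw
    have hj : ∃ j : Fin ℓ, ∀ v : GV ℓ c, P (some (j, v)) ≠ P none := by
      by_contra h
      push_neg at h
      choose f hf using h
      have hginj : Function.Injective
          (fun o : Option (Fin ℓ) => (o.map (fun j => (j, f j)) : GV ℓ (c + 1))) := by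
        intro a b hab
        cases a <;> cases b <;> simp_all
      have hsub : Set.range (fun o : Option (Fin ℓ) => (o.map (fun j => (j, f j)) : GV ℓ (c + 1)))
          ⊆ {v : GV ℓ (c + 1) | P v = P none} := by
        rintro _ ⟨o, rfl⟩
        cases o with
        | none => rfl
        | some j => exact hf j
      have h1 : (Set.range (fun o : Option (Fin ℓ) =>
          (o.map (fun j => (j, f j)) : GV ℓ (c + 1)))).ncard = ℓ + 1 := by
        rw [← Nat.card_coe_set_eq, Nat.card_range_of_injective hginj]
        simp [Nat.card_eq_fintype_card]
      have h2 := Set.ncard_le_ncard hsub (Set.toFinite _)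
      have h3 := hw (P none)
      exact absurd (le_trans h2 h3) (by omega)
    obtain ⟨j, hj⟩ := hj
    have hw' : ∀ i : ι, {v : GV ℓ c | P (some (j, v)) = i}.ncard ≤ ℓ := by
      intro i
      have hinj : Function.Injective (fun v : GV ℓ c => (some (j, v) : GV ℓ (c + 1))) := by
        intro a b hab; simpa using hab
      calc {v : GV ℓ c | P (some (j, v)) = i}.ncard
          = ((fun v : GV ℓ c => (some (j, v) : GV ℓ (c + 1))) ''
              {v : GV ℓ c | P (some (j, v)) = i}).ncard :=
            (Set.ncard_image_of_injective _ hinj).symm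
        _ ≤ {w : GV ℓ (c + 1) | P w = i}.ncard :=
            Set.ncard_le_ncard (by rintro _ ⟨v, hv, rfl⟩; exact hv) (Set.toFinite _)
        _ ≤ ℓ := hw i
    obtain ⟨s', hs', hinj'⟩ := ih (fun v => P (some (j, v))) hw'
    refine ⟨insert (@id (GV ℓ (c + 1)) none) (s'.image (fun v => @id (GV ℓ (c + 1)) (some (j, v)))), ⟨?_, ?_⟩, ?_⟩
    · intro a ha b hb hab
      simp only [Finset.coe_insert, Set.mem_insert_iff, Finset.coe_image, Set.mem_image,
        Finset.mem_coe] at ha hb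
      rcases ha with rfl | ⟨v, hv, rfl⟩ <;> rcases hb with rfl | ⟨w, hw2, rfl⟩
      · exact absurd rfl hab
      · exact trivial
      · exact trivial
      · exact ⟨rfl, hs'.1 hv hw2 (fun h => hab (by rw [h]))⟩
    · rw [Finset.card_insert_of_notMem (by simp; intro x _ h; exact Option.some_ne_none _ h),
        Finset.card_image_of_injective (f := fun v => @id (GV ℓ (c + 1)) (some (j, v))) _ (fun a b h => congrArg Prod.snd (Option.some.inj h)), hs'.2]
    · intro x hx y hy hxy
      simp only [Finset.coe_insert, Set.mem_insert_iff, Finset.coe_image, Set.mem_image,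
        Finset.mem_coe] at hx hy
      rcases hx with rfl | ⟨v, hv, rfl⟩ <;> rcases hy with rfl | ⟨w, hw2, rfl⟩
      · rfl
      · exact absurd hxy.symm (hj w)
      · exact absurd hxy (hj v)
      · rw [hinj' hv hw2 hxy]

theorem stmt_8 (c ℓ : ℕ) (hℓ : 1 ≤ ℓ) {ι : Type} (P : GV ℓ c → ι)
    (hwidth : ∀ i : ι, {v : GV ℓ c | P v = i}.ncard ≤ ℓ) :
    ∃ s : Finset (GV ℓ c), (Gfam ℓ c).IsNClique (c + 2) s ∧ Set.InjOn P ↑s := by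
  exact stmt_8_aux ℓ hℓ c P hwidth
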